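/- For a G-space X, the following are equivalent: (1) STC_G(X) ≤ n; (2) there exist n open G×G-invariant sets U_1,…,U_n covering X×X and G×G-maps s̄_i:U_i→PX×_{ℸ(X)}PX such that p∘s̄_i is G×G-homotopic to the inclusion U_i⊆X×X. -/

import Mathlib

open unitInterval Set

namespace PaperTC

variable (G : Type*) {X : Type*} [Group G] [TopologicalSpace X] [MulAction G X]

/-- A set is invariant under the `G`-action. -/
def InvSet (U : Set X) : Prop := ∀ (g : G), ∀ x ∈ U, g • x ∈ U

/-- An open invariant set `U` is `G`-compressible into `A`: the inclusion `U ⊆ X` is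
`G`-homotopic to a map with values in `A`. -/
def Compressible (A U : Set X) : Prop :=
  ∃ H : C(↥U × I, X),
    (∀ u : ↥U, H (u, 0) = (u : X)) ∧
    (∀ u : ↥U, H (u, 1) ∈ A) ∧
    (∀ (g : G) (u v : ↥U) (t : I), (v : X) = g • (u : X) → H (v, t) = g • H (u, t))

/-- `X` can be covered by `n` open invariant sets, each `G`-compressible into `A`. -/
def CatLE (A : Set X) (n : ℕ) : Prop :=
  ∃ U : Fin n → Set X, (⋃ i, U i) = Set.univ ∧
    ∀ i, IsOpen (U i) ∧ InvSet G (U i) ∧ Compressible G A (U i)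

/-- The `A`-Lusternik–Schnirelmann `G`-category of `X`. -/
noncomputable def Cat (A : Set X) : ℕ∞ :=
  sInf {n : ℕ∞ | ∃ m : ℕ, n = (m : ℕ∞) ∧ CatLE G A m}


/-- The action of `G × H` on `X × Y` by `(g,h)•(x,y) = (g•x, h•y)`. -/
instance prodMulAction {G H X Y : Type*} [Monoid G] [Monoid H]
    [MulAction G X] [MulAction H Y] : MulAction (G × H) (X × Y) where
  smul p z := (p.1 • z.1, p.2 • z.2)
  one_smul _ := Prod.ext (one_smul _ _) (one_smul _ _)
  mul_smul _ _ _ := Prod.ext (mul_smul _ _ _) (mul_smul _ _ _)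

@[simp] theorem prod_smul_def {G H X Y : Type*} [Monoid G] [Monoid H]
    [MulAction G X] [MulAction H Y] (p : G × H) (z : X × Y) :
    p • z = (p.1 • z.1, p.2 • z.2) := rfl

/-- `ℸ(X) = (G×G)·Δ(X) ⊆ X × X`, the saturation of the diagonal under the
`G × G`-action. -/
def Daleth (G : Type*) {X : Type*} [Group G] [MulAction G X] : Set (X × X) :=
  {p | ∃ (g₁ g₂ : G) (x : X), p = (g₁ • x, g₂ • x)}

/-- The symmetric topological complexity `STC_G(X) = _{ℸ(X)} cat_{G×G}(X × X)`. -/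
noncomputable def STC (G : Type*) (X : Type*) [Group G] [TopologicalSpace X]
    [MulAction G X] : ℕ∞ :=
  Cat (G × G) (Daleth G (X := X))

/-- The fibered product `PX ×_{ℸ(X)} PX = {(γ, δ) : G·γ(1) = G·δ(0)}`. -/
def PPair (G : Type*) (X : Type*) [Group G] [TopologicalSpace X] [MulAction G X] :=
  {p : C(I, X) × C(I, X) // MulAction.orbit G (p.1 1) = MulAction.orbit G (p.2 0)}

instance {G X : Type*} [Group G] [TopologicalSpace X] [MulAction G X] :
    TopologicalSpace (PPair G X) :=
  instTopologicalSpaceSubtype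

/-- The endpoint map `p : PX ×_{ℸ(X)} PX → X × X`, `(γ, δ) ↦ (γ(0), δ(1))`. -/
def pPair {G X : Type*} [Group G] [TopologicalSpace X] [MulAction G X]
    (e : PPair G X) : X × X :=
  (e.1.1 0, e.1.2 1)

/-- `STC_G(X) ≤ n` iff `X × X` can be covered by `n` open
`G × G`-invariant sets `U_i` admitting `G × G`-maps `s̄_i : U_i → PX ×_{ℸ(X)} PX`
with `p ∘ s̄_i` `G × G`-homotopic to the inclusion `U_i ⊆ X × X`. -/
theorem stmt_13 {G X : Type*} [Group G] [TopologicalSpace G] [CompactSpace G]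
    [TopologicalSpace X] [MulAction G X] [ContinuousSMul G X] (n : ℕ) :
    CatLE (G × G) (Daleth G (X := X)) n ↔
      (∃ U : Fin n → Set (X × X), (⋃ i, U i) = Set.univ ∧
        ∀ i, IsOpen (U i) ∧ InvSet (G × G) (U i) ∧
          ∃ s : C(↥(U i), PPair G X),
            (∀ (g : G × G) (u v : ↥(U i)) (t : I), (v : X × X) = g • (u : X × X) →
              ((s v).1.1 t = g.1 • (s u).1.1 t) ∧ ((s v).1.2 t = g.2 • (s u).1.2 t)) ∧
            ∃ K : C(↥(U i) × I, X × X),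
              (∀ u : ↥(U i), K (u, 0) = pPair (s u)) ∧
              (∀ u : ↥(U i), K (u, 1) = (u : X × X)) ∧
              (∀ (g : G × G) (u v : ↥(U i)) (t : I), (v : X × X) = g • (u : X × X) →
                K (v, t) = g • K (u, t))) := by
  classical
  constructor
  · rintro ⟨U, hcov, hU⟩
    refine ⟨U, hcov, fun i => ?_⟩
    obtain ⟨hop, hinv, H, hH0, hH1, hHeq⟩ := hU i
    refine ⟨hop, hinv, ?_⟩
    -- build the section from the compression homotopy
    set σc : C(I, I) := ⟨unitInterval.symm, unitInterval.continuous_symm⟩ with hσc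
    set H1 : C(↥(U i), C(I, X)) :=
      ContinuousMap.curry ((ContinuousMap.fst).comp H) with hH1def
    set H2 : C(↥(U i), C(I, X)) :=
      ContinuousMap.curry (((ContinuousMap.snd).comp H).comp
        ((ContinuousMap.id _).prodMap σc)) with hH2def
    have hH1app : ∀ u t, H1 u t = (H (u, t)).1 := fun u t => rfl
    have hH2app : ∀ u t, H2 u t = (H (u, σ t)).2 := fun u t => rfl
    have horb : ∀ u : ↥(U i),
        MulAction.orbit G (H1 u 1) = MulAction.orbit G (H2 u 0) := by
      intro u
      obtain ⟨g₁, g₂, x, hx⟩ := hH1 u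
      rw [hH1app, hH2app, unitInterval.symm_zero, hx]
      simp [MulAction.orbit_smul]
    refine ⟨⟨fun u => ⟨(H1 u, H2 u), horb u⟩,
      ((H1.continuous.prodMk H2.continuous).subtype_mk _)⟩, ?_, ?_⟩
    · intro g u v t hv
      have h1 := hHeq g u v t hv
      have h2 := hHeq g u v (σ t) hv
      constructor
      · show H1 v t = g.1 • H1 u t
        rw [hH1app, hH1app, h1]; rfl
      · show H2 v t = g.2 • H2 u t
        rw [hH2app, hH2app, h2]; rfl
    · refine ⟨⟨fun p => (p.1 : X × X),
        continuous_subtype_val.comp continuous_fst⟩, ?_, fun u => rfl, ?_⟩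
      · intro u
        show (u : X × X) = ((H1 u) 0, (H2 u) 1)
        rw [hH1app, hH2app, unitInterval.symm_one, hH0 u]
      · intro g u v t hv
        exact hv
  · rintro ⟨U, hcov, hU⟩
    refine ⟨U, hcov, fun i => ?_⟩
    obtain ⟨hop, hinv, s, hs, K, hK0, hK1, hKeq⟩ := hU i
    refine ⟨hop, hinv, ?_⟩
    have pi0 : Set.projIcc (0 : ℝ) 1 zero_le_one 0 = 0 := by
      apply Subtype.ext; simp [Set.projIcc]
    have pi1 : Set.projIcc (0 : ℝ) 1 zero_le_one 1 = 1 := by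
      apply Subtype.ext; simp [Set.projIcc]
    -- first-coordinate path family, second-coordinate path family
    have cγ : Continuous fun u : ↥(U i) => (s u).1.1 :=
      (continuous_fst.comp continuous_subtype_val).comp s.continuous
    have cδ : Continuous fun u : ↥(U i) => (s u).1.2 :=
      (continuous_snd.comp continuous_subtype_val).comp s.continuous
    have hcont : Continuous fun p : ↥(U i) × I =>
        if (p.2 : ℝ) ≤ 1 / 2 then
          K (p.1, Set.projIcc (0 : ℝ) 1 zero_le_one (1 - 2 * (p.2 : ℝ)))
        else ((s p.1).1.1 (Set.projIcc (0 : ℝ) 1 zero_le_one (2 * (p.2 : ℝ) - 1)),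
              (s p.1).1.2 (Set.projIcc (0 : ℝ) 1 zero_le_one (2 - 2 * (p.2 : ℝ)))) := by
      refine Continuous.if_le ?_ ?_ (continuous_subtype_val.comp continuous_snd)
        continuous_const ?_
      · exact K.continuous.comp (continuous_fst.prodMk
          (continuous_projIcc.comp (by fun_prop)))
      · have e1 : Continuous fun p : ↥(U i) × I =>
            Set.projIcc (0 : ℝ) 1 zero_le_one (2 * (p.2 : ℝ) - 1) :=
          continuous_projIcc.comp (by fun_prop)
        have e2 : Continuous fun p : ↥(U i) × I =>
            Set.projIcc (0 : ℝ) 1 zero_le_one (2 - 2 * (p.2 : ℝ)) :=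
          continuous_projIcc.comp (by fun_prop)
        exact (continuous_eval.comp
            ((cγ.comp continuous_fst).prodMk e1)).prodMk
          (continuous_eval.comp
            ((cδ.comp continuous_fst).prodMk e2))
      · intro p hp
        have h0 : (1 : ℝ) - 2 * (p.2 : ℝ) = 0 := by rw [hp]; ring
        have h1 : (2 : ℝ) * (p.2 : ℝ) - 1 = 0 := by rw [hp]; ring
        have h2 : (2 : ℝ) - 2 * (p.2 : ℝ) = 1 := by rw [hp]; ring
        rw [h0, h1, h2, pi0, pi1, hK0]
        rfl
    refine ⟨⟨_, hcont⟩, ?_, ?_, ?_⟩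
    · intro u
      show (if ((0 : I) : ℝ) ≤ 1 / 2 then _ else _) = (u : X × X)
      rw [if_pos (by norm_num)]
      have : (1 : ℝ) - 2 * ((0 : I) : ℝ) = 1 := by norm_num
      rw [this, pi1, hK1]
    · intro u
      show (if ((1 : I) : ℝ) ≤ 1 / 2 then _ else _) ∈ Daleth G
      rw [if_neg (by norm_num)]
      have e1 : (2 : ℝ) * ((1 : I) : ℝ) - 1 = 1 := by norm_num
      have e2 : (2 : ℝ) - 2 * ((1 : I) : ℝ) = 0 := by norm_num
      rw [e1, e2, pi0, pi1]
      have horb := (s u).2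
      have : (s u).1.2 0 ∈ MulAction.orbit G ((s u).1.1 1) := by
        rw [horb]; exact MulAction.mem_orbit_self _
      obtain ⟨g, hg⟩ := this
      refine ⟨1, g, (s u).1.1 1, ?_⟩
      rw [one_smul]
      exact Prod.ext rfl hg.symm
    · intro g u v t hv
      show (if ((t : I) : ℝ) ≤ 1 / 2 then _ else _)
          = g • (if ((t : I) : ℝ) ≤ 1 / 2 then _ else _)
      by_cases ht : ((t : I) : ℝ) ≤ 1 / 2
      · rw [if_pos ht, if_pos ht, hKeq g u v _ hv]
      · rw [if_neg ht, if_neg ht]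
        obtain ⟨h1, h2⟩ := hs g u v (Set.projIcc (0 : ℝ) 1 zero_le_one (2 * (t : ℝ) - 1)) hv
        obtain ⟨h3, h4⟩ := hs g u v (Set.projIcc (0 : ℝ) 1 zero_le_one (2 - 2 * (t : ℝ))) hv
        rw [prod_smul_def]
        exact Prod.ext h1 h4

end PaperTC
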